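/- (Univariate Bernstein representation over an interval.) Let n ∈ ℕ, let a_0, …, a_n ∈ ℝ, and let d̲, d̄ ∈ ℝ with d̲ ≠ d̄. Define b_k = ∑_{j=0}^{k} ((k.choose j : ℝ)/(n.choose j)) · (d̄ − d̲)^j · ∑_{i=j}^{n} ((i.choose j : ℝ)) · d̲^(i−j) · a_i for 0 ≤ k ≤ n. Then for every x ∈ ℝ, with t = (x − d̲)/(d̄ − d̲), one has ∑_{i=0}^{n} a_i x^i = ∑_{k=0}^{n} b_k · (n.choose k : ℝ) · t^k · (1 − t)^(n−k). -/

import Mathlib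

/-- Univariate Bernstein coefficients of the polynomial `∑ a_i x^i` over `[d̲, d̄]`. -/
noncomputable def bernCoeff1 (n : ℕ) (a : ℕ → ℝ) (dlo dhi : ℝ) (k : ℕ) : ℝ :=
  ∑ j ∈ Finset.range (k + 1),
    ((k.choose j : ℝ) / (n.choose j : ℝ)) * (dhi - dlo) ^ j *
      ∑ i ∈ Finset.Icc j n, (i.choose j : ℝ) * dlo ^ (i - j) * a i

/-- Key moment identity: `∑_{k=j}^{n} C(k,j) C(n,k) t^k (1-t)^{n-k} = C(n,j) t^j`. -/
lemma bern_moment (n j : ℕ) (hj : j ≤ n) (t : ℝ) :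
    ∑ k ∈ Finset.Icc j n, (k.choose j : ℝ) * (n.choose k : ℝ) * t ^ k * (1 - t) ^ (n - k)
      = (n.choose j : ℝ) * t ^ j := by
  have reindex :
      ∑ k ∈ Finset.Icc j n, (k.choose j : ℝ) * (n.choose k : ℝ) * t ^ k * (1 - t) ^ (n - k)
        = ∑ m ∈ Finset.range (n - j + 1),
            ((j + m).choose j : ℝ) * (n.choose (j + m) : ℝ) * t ^ (j + m) *
              (1 - t) ^ (n - (j + m)) := by
    apply Finset.sum_nbij' (fun k => k - j) (fun m => j + m)
    · intro k hk; simp only [Finset.mem_Icc] at hk; simp only [Finset.mem_range]; omega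
    · intro m hm; simp only [Finset.mem_range] at hm; simp only [Finset.mem_Icc]; omega
    · intro k hk; simp only [Finset.mem_Icc] at hk; omega
    · intro m _; omega
    · intro k hk
      simp only [Finset.mem_Icc] at hk
      have : j + (k - j) = k := by omega
      rw [this]
  rw [reindex]
  have h1 : ∀ m ∈ Finset.range (n - j + 1),
      ((j + m).choose j : ℝ) * (n.choose (j + m) : ℝ) * t ^ (j + m) * (1 - t) ^ (n - (j + m))
        = (n.choose j : ℝ) * t ^ j *
            (t ^ m * (1 - t) ^ (n - j - m) * ((n - j).choose m : ℝ)) := by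
    intro m hm
    rw [Finset.mem_range] at hm
    have hmn : j + m ≤ n := by omega
    have key : n.choose (j + m) * (j + m).choose j = n.choose j * (n - j).choose m := by
      have := Nat.choose_mul (n := n) (Nat.le_add_right j m)
      simpa using this
    have keyR : ((j + m).choose j : ℝ) * (n.choose (j + m) : ℝ)
        = (n.choose j : ℝ) * ((n - j).choose m : ℝ) := by
      rw [mul_comm]
      exact_mod_cast congrArg (Nat.cast : ℕ → ℝ) key
    have hsub : n - (j + m) = n - j - m := by omega
    rw [keyR, hsub, pow_add]
    ring
  rw [Finset.sum_congr rfl h1, ← Finset.mul_sum]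
  have binom : ∑ m ∈ Finset.range (n - j + 1),
      t ^ m * (1 - t) ^ (n - j - m) * ((n - j).choose m : ℝ) = 1 := by
    have h := add_pow t (1 - t) (n - j)
    simp only [add_sub_cancel, one_pow] at h
    exact h.symm
  rw [binom, mul_one]

/-- Univariate Bernstein representation over an interval `[d̲, d̄]` with `d̲ ≠ d̄`. -/
theorem univariate_bernstein_representation (n : ℕ) (a : ℕ → ℝ) (dlo dhi : ℝ)
    (hd : dlo ≠ dhi) (x : ℝ) :
    ∑ i ∈ Finset.range (n + 1), a i * x ^ i
      = ∑ k ∈ Finset.range (n + 1),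
          bernCoeff1 n a dlo dhi k * (n.choose k : ℝ) *
            ((x - dlo) / (dhi - dlo)) ^ k * (1 - (x - dlo) / (dhi - dlo)) ^ (n - k) := by
  set t : ℝ := (x - dlo) / (dhi - dlo) with ht
  have hne : dhi - dlo ≠ 0 := sub_ne_zero.mpr (Ne.symm hd)
  have hx : x = dlo + (dhi - dlo) * t := by
    rw [ht, mul_div_assoc', mul_div_cancel_left₀ _ hne]; ring
  obtain ⟨S, hS⟩ : ∃ S : ℕ → ℝ, ∀ j, S j = ∑ i ∈ Finset.Icc j n, (i.choose j : ℝ) * dlo ^ (i - j) * a i :=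
    ⟨_, fun _ => rfl⟩
  have RHS_eq :
      ∑ k ∈ Finset.range (n + 1),
          bernCoeff1 n a dlo dhi k * (n.choose k : ℝ) * t ^ k * (1 - t) ^ (n - k)
        = ∑ j ∈ Finset.range (n + 1),
            ((dhi - dlo) ^ j * S j) * ((n.choose j : ℝ))⁻¹ *
              ∑ k ∈ Finset.Icc j n,
                (k.choose j : ℝ) * (n.choose k : ℝ) * t ^ k * (1 - t) ^ (n - k) := by
    unfold bernCoeff1
    simp_rw [← hS]
    simp_rw [Finset.sum_mul, Finset.mul_sum]
    rw [Finset.sum_sigma', Finset.sum_sigma']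
    apply Finset.sum_nbij' (fun p => ⟨p.2, p.1⟩) (fun p => ⟨p.2, p.1⟩)
    · rintro ⟨k, j⟩ h
      simp only [Finset.mem_sigma, Finset.mem_range, Finset.mem_Icc] at h ⊢
      omega
    · rintro ⟨j, k⟩ h
      simp only [Finset.mem_sigma, Finset.mem_range, Finset.mem_Icc] at h ⊢
      omega
    · rintro ⟨k, j⟩ _; rfl
    · rintro ⟨j, k⟩ _; rfl
    · rintro ⟨k, j⟩ h
      simp only [Finset.mem_sigma, Finset.mem_range, Finset.mem_Icc] at h
      field_simp
  rw [RHS_eq]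
  have step2 : ∀ j ∈ Finset.range (n + 1),
      ((dhi - dlo) ^ j * S j) * ((n.choose j : ℝ))⁻¹ *
          ∑ k ∈ Finset.Icc j n,
            (k.choose j : ℝ) * (n.choose k : ℝ) * t ^ k * (1 - t) ^ (n - k)
        = ((dhi - dlo) * t) ^ j * S j := by
    intro j hj
    rw [Finset.mem_range] at hj
    have hjn : j ≤ n := by omega
    rw [bern_moment n j hjn t]
    have hpos : (n.choose j : ℝ) ≠ 0 := Nat.cast_ne_zero.mpr (Nat.choose_pos hjn).ne'
    rw [mul_pow]
    field_simp
  rw [Finset.sum_congr rfl step2]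
  simp_rw [hS]
  have swap :
      ∑ j ∈ Finset.range (n + 1),
          ((dhi - dlo) * t) ^ j *
            ∑ i ∈ Finset.Icc j n, (i.choose j : ℝ) * dlo ^ (i - j) * a i
        = ∑ i ∈ Finset.range (n + 1),
            ∑ j ∈ Finset.range (i + 1),
              ((dhi - dlo) * t) ^ j * ((i.choose j : ℝ) * dlo ^ (i - j) * a i) := by
    simp_rw [Finset.mul_sum]
    rw [Finset.sum_sigma', Finset.sum_sigma']
    apply Finset.sum_nbij' (fun p => ⟨p.2, p.1⟩) (fun p => ⟨p.2, p.1⟩)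
    · rintro ⟨j, i⟩ h
      simp only [Finset.mem_sigma, Finset.mem_range, Finset.mem_Icc] at h ⊢
      omega
    · rintro ⟨i, j⟩ h
      simp only [Finset.mem_sigma, Finset.mem_range, Finset.mem_Icc] at h ⊢
      omega
    · rintro ⟨j, i⟩ _; rfl
    · rintro ⟨i, j⟩ _; rfl
    · rintro ⟨j, i⟩ _; rfl
  rw [swap]
  apply Finset.sum_congr rfl
  intro i _
  have hbin := add_pow ((dhi - dlo) * t) dlo i
  have hxi : ((dhi - dlo) * t + dlo) = x := by rw [hx]; ring
  rw [hxi] at hbin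
  rw [hbin, Finset.mul_sum]
  apply Finset.sum_congr rfl
  intro j _
  ring
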